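/- (PAC-Bayes via Donsker–Varadhan and Markov.) Let $p$ be a prior probability density over parameters $w$, let $\lambda > 0$, $\delta \in (0,1]$, and define $C(\lambda, p) = \log \mathbb{E}_{w\sim p, S \sim D^m}[e^{\lambda(L_D(w) - L_S(w))}]$ (assumed finite). Then with probability at least $1 - \delta$ over $S \sim D^m$, simultaneously for all posterior densities $q$: $\mathbb{E}_{w\sim q}[L_D(w)] \le \mathbb{E}_{w\sim q}[L_S(w)] + \frac{C(\lambda,p) + KL(q\|p) + \log(1/\delta)}{\lambda}$. -/

import Mathlib

open MeasureTheory Real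

lemma my_donsker_varadhan {W : Type*} [MeasurableSpace W]
    (p q : Measure W) [IsProbabilityMeasure p] [IsProbabilityMeasure q]
    (hqp : q ≪ p) (f : W → ℝ) (hfm : Measurable f)
    (hfi : Integrable f q)
    (hexp : Integrable (fun w => Real.exp (f w)) p)
    (hkl : Integrable (fun w => Real.log (q.rnDeriv p w).toReal) q) :
    ∫ w, f w ∂q ≤ (∫ w, Real.log (q.rnDeriv p w).toReal ∂q)
      + Real.log (∫ w, Real.exp (f w) ∂p) := by
  set g : W → ℝ := fun w => (q.rnDeriv p w).toReal with hg
  have hgm : Measurable g := (Measure.measurable_rnDeriv q p).ennreal_toReal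
  set h : W → ℝ := fun w => f w - Real.log (g w) with hh
  have hhm : Measurable h := hfm.sub hgm.log
  have hhi : Integrable h q := hfi.sub hkl
  have hgnn : ∀ w, 0 ≤ g w := fun w => ENNReal.toReal_nonneg
  have hgu_le : ∀ w, g w * Real.exp (h w) ≤ Real.exp (f w) := by
    intro w
    rcases eq_or_lt_of_le (hgnn w) with h0 | h0
    · rw [← h0, zero_mul]; exact (Real.exp_pos _).le
    · have : Real.exp (h w) = Real.exp (f w) / g w := by
        rw [hh]; rw [Real.exp_sub, Real.exp_log h0]
      rw [this, mul_div_cancel₀ _ (ne_of_gt h0)]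
  have hgu_nn : ∀ w, 0 ≤ g w * Real.exp (h w) :=
    fun w => mul_nonneg (hgnn w) (Real.exp_pos _).le
  -- integrability of exp ∘ h wrt q via change of measure
  have hui : Integrable (fun w => Real.exp (h w)) q := by
    rw [← integrable_rnDeriv_smul_iff hqp]
    refine hexp.mono ((hgm.mul hhm.exp).aestronglyMeasurable) ?_
    filter_upwards with w
    simp only [smul_eq_mul, Real.norm_eq_abs, abs_of_nonneg (hgu_nn w),
      abs_of_nonneg (Real.exp_pos (f w)).le]
    exact (abs_of_nonneg (hgu_nn w)).trans_le (hgu_le w)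
  have hint_le : ∫ w, Real.exp (h w) ∂q ≤ ∫ w, Real.exp (f w) ∂p := by
    have := integral_rnDeriv_smul (f := fun w => Real.exp (h w)) hqp
    rw [← this]
    refine integral_mono_of_nonneg (Filter.Eventually.of_forall ?_) hexp
      (Filter.Eventually.of_forall ?_)
    · intro w; exact hgu_nn w
    · intro w; exact hgu_le w
  have hpos : 0 < ∫ w, Real.exp (h w) ∂q := integral_exp_pos hui
  -- Jensen
  have hjen : Real.exp (∫ w, h w ∂q) ≤ ∫ w, Real.exp (h w) ∂q := by
    have := convexOn_exp.map_integral_le (μ := q) (f := h)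
      Real.continuous_exp.continuousOn isClosed_univ
      (Filter.Eventually.of_forall fun w => Set.mem_univ _) hhi hui
    exact this
  have hle : ∫ w, h w ∂q ≤ Real.log (∫ w, Real.exp (f w) ∂p) := by
    rw [Real.le_log_iff_exp_le (lt_of_lt_of_le hpos hint_le)]
    exact hjen.trans hint_le
  have hsplit : ∫ w, h w ∂q
      = ∫ w, f w ∂q - ∫ w, Real.log (g w) ∂q := integral_sub hfi hkl
  rw [hsplit] at hle
  linarith

/-- PAC-Bayes bound (Alquier et al.): with probability at least `1 - δ` over the draw
of the i.i.d. sample `S ∼ D^m`, simultaneously for every posterior `q ≪ p`,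
`E_q[L_D] ≤ E_q[L_S] + (C(λ,p) + KL(q‖p) + log(1/δ)) / λ`. -/
theorem pac_bayes_bound
    {X Y W : Type*} [MeasurableSpace X] [MeasurableSpace Y] [MeasurableSpace W]
    (D : Measure (X × Y)) [IsProbabilityMeasure D]
    (p : Measure W) [IsProbabilityMeasure p]
    (ℓ : W → X → Y → ℝ) (hmeas : Measurable fun t : W × X × Y => ℓ t.1 t.2.1 t.2.2)
    (m : ℕ) (hm : 0 < m) (lam : ℝ) (hlam : 0 < lam) (δ : ℝ) (hδ0 : 0 < δ) (hδ1 : δ ≤ 1)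
    (LD : W → ℝ) (hLD : ∀ w, LD w = ∫ t, ℓ w t.1 t.2 ∂D)
    (LS : W → (Fin m → X × Y) → ℝ)
    (hLS : ∀ w S, LS w S = (1 / (m : ℝ)) * ∑ i, ℓ w (S i).1 (S i).2)
    (C : ℝ)
    (hC : C = Real.log (∫ w, ∫ S, Real.exp (lam * (LD w - LS w S))
        ∂(Measure.pi fun _ : Fin m => D) ∂p))
    (hint : Integrable
      (fun t : W × (Fin m → X × Y) => Real.exp (lam * (LD t.1 - LS t.1 t.2)))
      (p.prod (Measure.pi fun _ : Fin m => D))) :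
    ENNReal.ofReal (1 - δ) ≤
      (Measure.pi fun _ : Fin m => D)
        {S | ∀ q : Measure W, IsProbabilityMeasure q → q ≪ p →
          Integrable LD q → Integrable (fun w => LS w S) q →
          Integrable (fun w => Real.log (q.rnDeriv p w).toReal) q →
          ∫ w, LD w ∂q ≤ (∫ w, LS w S ∂q) +
            (C + (∫ w, Real.log (q.rnDeriv p w).toReal ∂q) + Real.log (1 / δ)) / lam} := by

  set μ : Measure (Fin m → X × Y) := Measure.pi fun _ : Fin m => D with hμdef
  -- measurability of LD and LS
  have hLDm : Measurable LD := by
    have hsm : StronglyMeasurable fun t : W × (X × Y) => ℓ t.1 t.2.1 t.2.2 :=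
      hmeas.stronglyMeasurable
    have := hsm.integral_prod_right' (ν := D)
    have heq : LD = fun w => ∫ t : X × Y, ℓ w t.1 t.2 ∂D := funext hLD
    rw [heq]
    exact this.measurable
  have hLSm : Measurable fun t : W × (Fin m → X × Y) => LS t.1 t.2 := by
    have heq : (fun t : W × (Fin m → X × Y) => LS t.1 t.2)
        = fun t : W × (Fin m → X × Y) =>
          (1 / (m : ℝ)) * ∑ i, ℓ t.1 (t.2 i).1 (t.2 i).2 := by
      funext t; exact hLS t.1 t.2
    rw [heq]
    refine Measurable.const_mul ?_ _
    refine Finset.measurable_sum _ fun i _ => ?_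
    exact hmeas.comp (measurable_fst.prodMk ((measurable_pi_apply i).comp measurable_snd))
  have hφm : Measurable fun t : W × (Fin m → X × Y) =>
      Real.exp (lam * (LD t.1 - LS t.1 t.2)) :=
    (((hLDm.comp measurable_fst).sub hLSm).const_mul lam).exp
  set F : (Fin m → X × Y) → ℝ :=
    fun S => ∫ w, Real.exp (lam * (LD w - LS w S)) ∂p with hFdef
  have hFm : Measurable F :=
    (hφm.stronglyMeasurable.integral_prod_left' (μ := p)).measurable
  set I : ℝ := ∫ S, F S ∂μ with hIdef
  have hswap : (∫ w, ∫ S, Real.exp (lam * (LD w - LS w S)) ∂μ ∂p) = I :=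
    integral_integral_swap (f := fun w S => Real.exp (lam * (LD w - LS w S))) hint
  have hCI : C = Real.log I := by rw [hC, hswap]
  have hIpos : 0 < I := by
    have h1 : (∫ w, ∫ S, Real.exp (lam * (LD w - LS w S)) ∂μ ∂p)
        = ∫ z, Real.exp (lam * (LD z.1 - LS z.1 z.2)) ∂(p.prod μ) :=
      integral_integral (f := fun w S => Real.exp (lam * (LD w - LS w S))) hint
    have h2 : 0 < ∫ z : W × (Fin m → X × Y),
        Real.exp (lam * (LD z.1 - LS z.1 z.2)) ∂(p.prod μ) := integral_exp_pos hint
    rw [← hswap, h1]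
    exact h2
  -- Markov
  have hFint : Integrable F μ := hint.integral_prod_right
  have hFnn : 0 ≤ᵐ[μ] F := Filter.Eventually.of_forall fun S =>
    integral_nonneg fun w => (Real.exp_pos _).le
  have hmark : μ {S | I / δ ≤ F S} ≤ ENNReal.ofReal δ := by
    have h := mul_meas_ge_le_integral_of_nonneg hFnn hFint (I / δ)
    have hfin : μ {S | I / δ ≤ F S} ≠ ⊤ := measure_ne_top _ _
    have htoReal : (μ {S | I / δ ≤ F S}).toReal ≤ δ := by
      have hIδ : 0 < I / δ := div_pos hIpos hδ0
      have hIle : (∫ S, F S ∂μ) = I := rfl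
      rw [hIle] at h
      have h' : (μ {S | I / δ ≤ F S}).toReal * (I / δ) ≤ I := by rwa [mul_comm]
      have hx := (le_div_iff₀ hIδ).mpr h'
      have hdd : I / (I / δ) = δ := by
        field_simp
      rwa [hdd] at hx
    calc μ {S | I / δ ≤ F S} = ENNReal.ofReal (μ {S | I / δ ≤ F S}).toReal :=
          (ENNReal.ofReal_toReal hfin).symm
      _ ≤ ENNReal.ofReal δ := ENNReal.ofReal_le_ofReal htoReal
  have hEmeas : MeasurableSet {S | I / δ ≤ F S} :=
    measurableSet_le measurable_const hFm
  -- good event : sections integrable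
  have hae : ∀ᵐ S ∂μ, Integrable
      (fun w => Real.exp (lam * (LD w - LS w S))) p := hint.prod_left_ae
  -- core implication
  have hcore : ∀ S : Fin m → X × Y,
      Integrable (fun w => Real.exp (lam * (LD w - LS w S))) p →
      ¬ (I / δ ≤ F S) →
      ∀ q : Measure W, IsProbabilityMeasure q → q ≪ p →
        Integrable LD q → Integrable (fun w => LS w S) q →
        Integrable (fun w => Real.log (q.rnDeriv p w).toReal) q →
        ∫ w, LD w ∂q ≤ (∫ w, LS w S ∂q) +
          (C + (∫ w, Real.log (q.rnDeriv p w).toReal ∂q) + Real.log (1 / δ)) / lam := by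
    intro S hSint hSlt q hq hqp hLDq hLSq hklq
    push_neg at hSlt
    set f : W → ℝ := fun w => lam * (LD w - LS w S) with hf
    have hfm : Measurable f := by
      refine ((hLDm.sub ?_).const_mul lam)
      exact hLSm.comp (measurable_id.prodMk measurable_const)
    have hfi : Integrable f q := (hLDq.sub hLSq).const_mul lam
    have hdv := my_donsker_varadhan p q hqp f hfm hfi hSint hklq
    have hFSpos : 0 < F S := integral_exp_pos hSint
    have hlog : Real.log (F S) ≤ C + Real.log (1 / δ) := by
      have h1 : Real.log (F S) ≤ Real.log (I / δ) := Real.log_le_log hFSpos hSlt.le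
      have h2 : Real.log (I / δ) = Real.log I - Real.log δ :=
        Real.log_div (ne_of_gt hIpos) (ne_of_gt hδ0)
      have h3 : Real.log (1 / δ) = - Real.log δ := by
        rw [one_div, Real.log_inv]
      rw [h2, ← hCI] at h1
      linarith
    have hFS : (∫ w, Real.exp (f w) ∂p) = F S := rfl
    rw [hFS] at hdv
    have hsplit : (∫ w, f w ∂q)
        = lam * ((∫ w, LD w ∂q) - ∫ w, LS w S ∂q) := by
      rw [hf]
      rw [integral_const_mul, integral_sub hLDq hLSq]
    rw [hsplit] at hdv
    set KL : ℝ := ∫ w, Real.log (q.rnDeriv p w).toReal ∂q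
    have hfinal : lam * ((∫ w, LD w ∂q) - ∫ w, LS w S ∂q)
        ≤ C + KL + Real.log (1 / δ) := by linarith
    have := (le_div_iff₀ hlam).mpr
      (by linarith : ((∫ w, LD w ∂q) - ∫ w, LS w S ∂q) * lam
        ≤ C + KL + Real.log (1 / δ))
    linarith
  -- assemble
  set T : Set (Fin m → X × Y) :=
    {S | ∀ q : Measure W, IsProbabilityMeasure q → q ≪ p →
      Integrable LD q → Integrable (fun w => LS w S) q →
      Integrable (fun w => Real.log (q.rnDeriv p w).toReal) q →
      ∫ w, LD w ∂q ≤ (∫ w, LS w S ∂q) +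
        (C + (∫ w, Real.log (q.rnDeriv p w).toReal ∂q) + Real.log (1 / δ)) / lam}
    with hTdef
  set B : Set (Fin m → X × Y) :=
    {S | ¬ Integrable (fun w => Real.exp (lam * (LD w - LS w S))) p} with hBdef
  have hBnull : μ B = 0 := by
    rw [hBdef]; exact hae
  have hsubset : {S | I / δ ≤ F S}ᶜ ⊆ T ∪ B := by
    intro S hS
    by_cases hSI : Integrable (fun w => Real.exp (lam * (LD w - LS w S))) p
    · exact Or.inl (hcore S hSI hS)
    · exact Or.inr hSI
  have h1 : μ {S | I / δ ≤ F S}ᶜ ≤ μ T := by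
    calc μ {S | I / δ ≤ F S}ᶜ ≤ μ (T ∪ B) := measure_mono hsubset
      _ ≤ μ T + μ B := measure_union_le _ _
      _ = μ T := by rw [hBnull, add_zero]
  have h2 : ENNReal.ofReal (1 - δ) ≤ μ {S | I / δ ≤ F S}ᶜ := by
    rw [prob_compl_eq_one_sub hEmeas]
    have : ENNReal.ofReal (1 - δ) = 1 - ENNReal.ofReal δ := by
      rw [ENNReal.ofReal_sub 1 hδ0.le, ENNReal.ofReal_one]
    rw [this]
    exact tsub_le_tsub_left hmark 1
  exact h2.trans h1
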